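/- Fix real numbers 0 < f₋ < f₊ and δ > 0, and define h₀ : ℝ → ℝ by h₀(y) = y − (2/(f₊ − f₋))·[ f₊δ − √( f₊²δ² − yδ(f₊ − f₋)(f₋ + δ(f₊ − f₋)) ) ]. Then h₀(0) = 0 and h₀ is differentiable at 0 with derivative h₀′(0) = (1 − f₋/f₊)(1 − δ) = L; moreover if additionally δ < 1 then 0 < L < 1. -/

import Mathlib

/-- Fix `0 < f₋ < f₊` and `δ > 0`, and define
`h₀(y) = y − (2/(f₊ − f₋))·[ f₊δ − √( f₊²δ² − yδ(f₊ − f₋)(f₋ + δ(f₊ − f₋)) ) ]`.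
Then `h₀ 0 = 0` and `h₀` is differentiable at `0` with derivative
`h₀′(0) = (1 − f₋/f₊)(1 − δ) = L`; moreover if additionally `δ < 1` then `0 < L < 1`. -/
theorem rearrangement_map_linearization (fm fp δ : ℝ)
    (hfm : 0 < fm) (hfmfp : fm < fp) (hδ : 0 < δ) :
    (fun y : ℝ => y - (2 / (fp - fm)) *
        (fp * δ - Real.sqrt (fp ^ 2 * δ ^ 2 -
          y * δ * (fp - fm) * (fm + δ * (fp - fm))))) 0 = 0 ∧
    HasDerivAt (fun y : ℝ => y - (2 / (fp - fm)) *
        (fp * δ - Real.sqrt (fp ^ 2 * δ ^ 2 -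
          y * δ * (fp - fm) * (fm + δ * (fp - fm)))))
      ((1 - fm / fp) * (1 - δ)) 0 ∧
    (δ < 1 → 0 < (1 - fm / fp) * (1 - δ) ∧ (1 - fm / fp) * (1 - δ) < 1) := by
  have hfp : 0 < fp := hfm.trans hfmfp
  have hd : 0 < fp - fm := sub_pos.mpr hfmfp
  have hsq : Real.sqrt (fp ^ 2 * δ ^ 2) = fp * δ := by
    rw [← mul_pow, Real.sqrt_sq (by positivity)]
  refine ⟨?_, ?_, ?_⟩
  · simp [hsq]
  · have hg0 : fp ^ 2 * δ ^ 2 - (0:ℝ) * δ * (fp - fm) * (fm + δ * (fp - fm)) ≠ 0 := by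
      simp only [zero_mul, sub_zero]; positivity
    have hinner : HasDerivAt (fun y : ℝ => fp ^ 2 * δ ^ 2 -
        y * δ * (fp - fm) * (fm + δ * (fp - fm)))
        (-(δ * (fp - fm) * (fm + δ * (fp - fm)))) 0 := by
      have : HasDerivAt (fun y : ℝ => y * δ * (fp - fm) * (fm + δ * (fp - fm)))
          (δ * (fp - fm) * (fm + δ * (fp - fm))) 0 := by
        simpa using (((hasDerivAt_id (0:ℝ)).mul_const δ).mul_const (fp - fm)).mul_const
          (fm + δ * (fp - fm))
      have h2 := (hasDerivAt_const (0:ℝ) (fp ^ 2 * δ ^ 2)).sub this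
      rw [zero_sub] at h2
      exact h2
    have hs := (Real.hasDerivAt_sqrt hg0).comp 0 hinner
    have hfull := (hasDerivAt_id (0:ℝ)).sub
      (((hasDerivAt_const (0:ℝ) (fp * δ)).sub hs).const_mul (2 / (fp - fm)))
    refine hfull.congr_deriv ?_
    simp only [zero_mul, mul_zero, sub_zero] at *
    rw [hsq]
    field_simp
    ring
  · intro hδ1
    constructor
    · have h1 : 0 < 1 - fm / fp := by
        rw [sub_pos, div_lt_one hfp]; exact hfmfp
      have h2 : 0 < 1 - δ := by linarith
      positivity
    · have h1 : 1 - fm / fp < 1 := by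
        have : 0 < fm / fp := by positivity
        linarith
      have h1' : 0 < 1 - fm / fp := by
        rw [sub_pos, div_lt_one hfp]; exact hfmfp
      nlinarith
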